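/- arXiv:2108.05568 — 3 statements merged into one kernel-verified Lean document; each statement's English description precedes it below -/
import Mathlib

section
/- Monotonicity between reward and fee: If the two IC constraints between types θ_i and θ_j hold with 0 < θ_j < θ_i, then R_i ≥ R_j implies f_i ≥ f_j, and f_i > f_j implies R_i > R_j. -/
/-- Monotonicity between reward and fee under the two IC constraints. -/
theorem reward_fee_monotone (θi θj Ri Rj fi fj c : ℝ)
    (hθj : 0 < θj) (hθ : θj < θi) (hRi : 0 < Ri) (hRj : 0 < Rj) (hc : 0 < c)
    (hICi : (θi * Ri) ^ 2 / (2 * c) - fi ≥ (θi * Rj) ^ 2 / (2 * c) - fj)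
    (hICj : (θj * Rj) ^ 2 / (2 * c) - fj ≥ (θj * Ri) ^ 2 / (2 * c) - fi) :
    (Ri ≥ Rj → fi ≥ fj) ∧ (fi > fj → Ri > Rj) := by
  have h2c : (0:ℝ) < 2 * c := by linarith
  -- hICj ⇒ fi - fj ≥ θj²(Ri² - Rj²)/(2c)
  have hj : fi - fj ≥ θj ^ 2 * (Ri ^ 2 - Rj ^ 2) / (2 * c) := by
    rw [ge_iff_le, div_le_iff₀ h2c]
    have h1 : (θj * Ri) ^ 2 / (2 * c) - (θj * Rj) ^ 2 / (2 * c) ≤ fi - fj := by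
      linarith
    have h2 : (θj * Ri) ^ 2 / (2 * c) - (θj * Rj) ^ 2 / (2 * c)
        = θj ^ 2 * (Ri ^ 2 - Rj ^ 2) / (2 * c) := by ring
    rw [h2, div_le_iff₀ h2c] at h1
    linarith [h1]
  have hi : fi - fj ≤ θi ^ 2 * (Ri ^ 2 - Rj ^ 2) / (2 * c) := by
    have h1 : fi - fj ≤ (θi * Ri) ^ 2 / (2 * c) - (θi * Rj) ^ 2 / (2 * c) := by
      linarith
    have h2 : (θi * Ri) ^ 2 / (2 * c) - (θi * Rj) ^ 2 / (2 * c)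
        = θi ^ 2 * (Ri ^ 2 - Rj ^ 2) / (2 * c) := by ring
    linarith [h2 ▸ h1]
  constructor
  · intro hR
    have hsq : Ri ^ 2 - Rj ^ 2 ≥ 0 := by nlinarith
    have : θj ^ 2 * (Ri ^ 2 - Rj ^ 2) / (2 * c) ≥ 0 := by positivity
    linarith
  · intro hf
    have hpos : 0 < θi ^ 2 * (Ri ^ 2 - Rj ^ 2) / (2 * c) := by linarith
    have hsq : 0 < Ri ^ 2 - Rj ^ 2 := by
      by_contra h
      push_neg at h
      have : θi ^ 2 * (Ri ^ 2 - Rj ^ 2) ≤ 0 := by nlinarith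
      have := div_nonpos_of_nonpos_of_nonneg this (le_of_lt h2c)
      linarith
    nlinarith
end

section
/- Downward IC transitivity: If the adjacent downward IC constraints (θ_{k+1} R_{k+1})²/(2c) − f_{k+1} ≥ (θ_{k+1} R_k)²/(2c) − f_k hold for all k, types are ascending (θ_1 ≤ … ≤ θ_I, all positive), and rewards are nondecreasing (R_1 ≤ … ≤ R_I, all positive), then for every i > j the downward IC constraint (θ_i R_i)²/(2c) − f_i ≥ (θ_i R_j)²/(2c) − f_j holds. -/
/-- Downward IC transitivity: adjacent downward IC constraints, ascending types,
and nondecreasing rewards imply all downward IC constraints. -/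
theorem downward_IC_transitivity (θ R f : ℕ → ℝ) (c : ℝ) (hc : 0 < c)
    (hθpos : ∀ i, 0 < θ i) (hθmono : Monotone θ)
    (hRpos : ∀ i, 0 < R i) (hRmono : Monotone R)
    (hadj : ∀ k, (θ (k + 1) * R (k + 1)) ^ 2 / (2 * c) - f (k + 1) ≥
      (θ (k + 1) * R k) ^ 2 / (2 * c) - f k) :
    ∀ i j, j < i →
      (θ i * R i) ^ 2 / (2 * c) - f i ≥ (θ i * R j) ^ 2 / (2 * c) - f j := by
  have hc2 : (0:ℝ) < 2 * c := by linarith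
  -- one-step lemma
  have step : ∀ i j, j + 1 ≤ i →
      (θ i * R (j + 1)) ^ 2 / (2 * c) - f (j + 1) ≥
      (θ i * R j) ^ 2 / (2 * c) - f j := by
    intro i j hij
    have h := hadj j
    have h1 : θ (j + 1) ≤ θ i := hθmono hij
    have h2 : R j ≤ R (j + 1) := hRmono (Nat.le_succ j)
    have hθp : 0 < θ (j + 1) := hθpos (j + 1)
    have hRp : 0 < R j := hRpos j
    rw [ge_iff_le, sub_le_sub_iff, div_add' _ _ _ (ne_of_gt hc2),
      div_add' _ _ _ (ne_of_gt hc2), div_le_div_iff₀ hc2 hc2] at h ⊢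
    have hθsq : θ (j + 1) ^ 2 ≤ θ i ^ 2 := by nlinarith
    have hRsq : R j ^ 2 ≤ R (j + 1) ^ 2 := by nlinarith
    have key : 0 ≤ (θ i ^ 2 - θ (j + 1) ^ 2) * (R (j + 1) ^ 2 - R j ^ 2) :=
      mul_nonneg (by linarith) (by linarith)
    nlinarith [mul_nonneg hc2.le key]
  -- chain steps by induction on the gap
  have main : ∀ k i j, i = j + k + 1 →
      (θ i * R i) ^ 2 / (2 * c) - f i ≥ (θ i * R j) ^ 2 / (2 * c) - f j := by
    intro k
    induction k with
    | zero => intro i j hij; subst hij; exact step _ j (le_refl _)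
    | succ n ih =>
      intro i j hij
      have h1 := ih i (j + 1) (by omega)
      have h2 := step i j (by omega)
      linarith
  intro i j hij
  exact main (i - j - 1) i j (by omega)
end

section
/- The contract menu defined by R_i = G(M_i), f_1 = (θ_1 R_1)²/(2c), and f_i = (θ_i R_i)²/(2c) − (θ_i R_{i−1})²/(2c) + f_{i−1} for i ≥ 2 satisfies, when R_1 ≤ R_2 ≤ … ≤ R_I and 0 < θ_1 < θ_2 < … < θ_I, all IR constraints (θ_i R_i)²/(2c) − f_i ≥ 0 and all IC constraints (θ_i R_i)²/(2c) − f_i ≥ (θ_i R_j)²/(2c) − f_j for every i, j. -/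
/-- The optimal contract menu `R i = G (M i)` with recursively defined fees
satisfies all IR and IC constraints. -/
theorem optimal_menu_IR_IC (θ R f M : ℕ → ℝ) (G : ℝ → ℝ) (c : ℝ) (hc : 0 < c)
    (hθpos : ∀ i, 0 < θ i) (hθmono : StrictMono θ)
    (hR : ∀ i, R i = G (M i)) (hRpos : ∀ i, 0 < R i) (hRmono : Monotone R)
    (hf0 : f 0 = (θ 0 * R 0) ^ 2 / (2 * c))
    (hfrec : ∀ i, f (i + 1) =
      (θ (i + 1) * R (i + 1)) ^ 2 / (2 * c) - (θ (i + 1) * R i) ^ 2 / (2 * c) + f i) :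
    (∀ i, (θ i * R i) ^ 2 / (2 * c) - f i ≥ 0) ∧
      (∀ i j, (θ i * R i) ^ 2 / (2 * c) - f i ≥ (θ i * R j) ^ 2 / (2 * c) - f j) := by
  set g : ℕ → ℕ → ℝ := fun i j => (θ i * R j) ^ 2 / (2 * c) - f j with hg
  have hc2 : (2 * c) ≠ 0 := by positivity
  have hdef : ∀ i j, g i j = (θ i * R j) ^ 2 / (2 * c) - f j := fun i j => rfl
  have hstep : ∀ i j, g i (j + 1) - g i j =
      ((θ i) ^ 2 - (θ (j + 1)) ^ 2) * ((R (j + 1)) ^ 2 - (R j) ^ 2) / (2 * c) := by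
    intro i j
    simp only [hdef, hfrec j]
    field_simp
    ring
  have h00 : g 0 0 = 0 := by simp [hdef, hf0]
  have hkey : ∀ i, g (i + 1) (i + 1) = (θ (i + 1) * R i) ^ 2 / (2 * c) - f i := by
    intro i
    simp only [hdef, hfrec i]
    ring
  clear_value g
  clear hg
  have hRsq : ∀ j, (R j) ^ 2 ≤ (R (j + 1)) ^ 2 :=
    fun j => pow_le_pow_left₀ (hRpos j).le (hRmono (Nat.le_succ j)) 2
  have hθm : Monotone θ := hθmono.monotone
  have hup1 : ∀ i j, θ (j + 1) ≤ θ i → g i j ≤ g i (j + 1) := by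
    intro i j h
    have h2 : (θ (j + 1)) ^ 2 ≤ (θ i) ^ 2 := pow_le_pow_left₀ (hθpos _).le h 2
    have h3 := hstep i j
    have hnn : 0 ≤ ((θ i) ^ 2 - (θ (j + 1)) ^ 2) * ((R (j + 1)) ^ 2 - (R j) ^ 2) / (2 * c) :=
      div_nonneg (mul_nonneg (by linarith) (by linarith [hRsq j])) (by positivity)
    linarith
  have hdown1 : ∀ i j, θ i ≤ θ (j + 1) → g i (j + 1) ≤ g i j := by
    intro i j h
    have h2 : (θ i) ^ 2 ≤ (θ (j + 1)) ^ 2 := pow_le_pow_left₀ (hθpos _).le h 2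
    have h3 := hstep i j
    have hnp : ((θ i) ^ 2 - (θ (j + 1)) ^ 2) * ((R (j + 1)) ^ 2 - (R j) ^ 2) / (2 * c) ≤ 0 :=
      div_nonpos_of_nonpos_of_nonneg
        (mul_nonpos_of_nonpos_of_nonneg (by linarith) (by linarith [hRsq j])) (by positivity)
    linarith
  have hle : ∀ i d j, j + d ≤ i → g i j ≤ g i (j + d) := by
    intro i d
    induction d with
    | zero => intro j _; simp
    | succ d ih =>
        intro j hj
        have h1 : g i j ≤ g i (j + d) := ih j (by omega)
        have h2 : g i (j + d) ≤ g i (j + d + 1) := hup1 i (j + d) (hθm (by omega))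
        have h3 : j + d + 1 = j + (d + 1) := by omega
        rw [h3] at h2
        linarith
  have hge : ∀ i d, g i (i + d) ≤ g i i := by
    intro i d
    induction d with
    | zero => simp
    | succ d ih =>
        have h2 : g i (i + d + 1) ≤ g i (i + d) := hdown1 i (i + d) (hθm (by omega))
        have h3 : i + d + 1 = i + (d + 1) := by omega
        rw [h3] at h2
        linarith
  have hIC : ∀ i j, g i j ≤ g i i := by
    intro i j
    rcases le_total j i with h | h
    · obtain ⟨d, rfl⟩ := Nat.exists_eq_add_of_le h
      exact hle (j + d) d j le_rfl
    · obtain ⟨d, rfl⟩ := Nat.exists_eq_add_of_le h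
      exact hge i d
  have hIR : ∀ i, 0 ≤ g i i := by
    intro i
    induction i with
    | zero => rw [h00]
    | succ i ih =>
        have hθ : θ i ≤ θ (i + 1) := hθm (Nat.le_succ i)
        have hmul : θ i * R i ≤ θ (i + 1) * R i :=
          mul_le_mul_of_nonneg_right hθ (hRpos i).le
        have hsq : (θ i * R i) ^ 2 ≤ (θ (i + 1) * R i) ^ 2 :=
          pow_le_pow_left₀ (mul_pos (hθpos i) (hRpos i)).le hmul 2
        have hdiv : (θ i * R i) ^ 2 / (2 * c) ≤ (θ (i + 1) * R i) ^ 2 / (2 * c) := by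
          gcongr
        have key := hkey i
        have hii := hdef i i
        linarith
  constructor
  · intro i
    have h1 := hIR i
    rw [hdef] at h1
    linarith
  · intro i j
    have h1 := hIC i j
    rw [hdef, hdef] at h1
    linarith
end
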